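/- Fix y₃ with 0 < y₃ < √2. For m > 0, define y₂(m) = -2m + √(4m² + 4m·y₃ - y₃² + 4). Then the radicand 4m² + 4m·y₃ - y₃² + 4 is positive, and y₂ is strictly decreasing in m, i.e. dy₂/dm < 0 for all m > 0. -/

import Mathlib

open Real

theorem y2_decreasing_in_slope (y₃ : ℝ) (h0 : 0 < y₃) (h2 : y₃ < Real.sqrt 2) :
    (∀ m : ℝ, 0 < m → 0 < 4*m^2 + 4*m*y₃ - y₃^2 + 4) ∧
    (∀ m : ℝ, 0 < m →
      deriv (fun m : ℝ => -2*m + Real.sqrt (4*m^2 + 4*m*y₃ - y₃^2 + 4)) m < 0) ∧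
    StrictAntiOn (fun m : ℝ => -2*m + Real.sqrt (4*m^2 + 4*m*y₃ - y₃^2 + 4))
      (Set.Ioi 0) := by
  have hy2 : y₃ ^ 2 < 2 := by
    have := Real.sq_sqrt (by norm_num : (2:ℝ) ≥ 0)
    nlinarith [Real.sqrt_nonneg 2]
  have hpos : ∀ m : ℝ, 0 < m → 0 < 4*m^2 + 4*m*y₃ - y₃^2 + 4 := by
    intro m hm; nlinarith
  have hderiv : ∀ m : ℝ, 0 < m →
      HasDerivAt (fun m : ℝ => -2*m + Real.sqrt (4*m^2 + 4*m*y₃ - y₃^2 + 4))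
        (-2 + (4*(2*m) + 4*y₃) / (2 * Real.sqrt (4*m^2 + 4*m*y₃ - y₃^2 + 4))) m := by
    intro m hm
    have hg : HasDerivAt (fun m : ℝ => 4*m^2 + 4*m*y₃ - y₃^2 + 4) (4*(2*m) + 4*y₃) m := by
      have := ((hasDerivAt_pow 2 m).const_mul 4).add
        (((hasDerivAt_id m).const_mul 4).mul_const y₃)
      simpa [mul_comm, mul_assoc, pow_one] using
        ((this.sub_const (y₃^2)).add_const 4)
    have h1 : HasDerivAt (fun x : ℝ => -2 * x) (-2) m := by
      simpa using (hasDerivAt_id' m).const_mul (-2 : ℝ)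
    exact h1.add (hg.sqrt (ne_of_gt (hpos m hm)))
  have hneg : ∀ m : ℝ, 0 < m →
      (-2 + (4*(2*m) + 4*y₃) / (2 * Real.sqrt (4*m^2 + 4*m*y₃ - y₃^2 + 4))) < 0 := by
    intro m hm
    have hr := hpos m hm
    have hs : 2*m + y₃ < Real.sqrt (4*m^2 + 4*m*y₃ - y₃^2 + 4) := by
      rw [show (2*m + y₃ : ℝ) = Real.sqrt ((2*m + y₃)^2) from
        (Real.sqrt_sq (by positivity)).symm]
      exact Real.sqrt_lt_sqrt (by positivity) (by nlinarith)
    have hsp : 0 < Real.sqrt (4*m^2 + 4*m*y₃ - y₃^2 + 4) := Real.sqrt_pos.mpr hr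
    rw [show (-2 + (4*(2*m) + 4*y₃) / (2 * Real.sqrt (4*m^2 + 4*m*y₃ - y₃^2 + 4)) : ℝ)
        = ((4*(2*m) + 4*y₃) - 2 * (2 * Real.sqrt (4*m^2 + 4*m*y₃ - y₃^2 + 4)))
          / (2 * Real.sqrt (4*m^2 + 4*m*y₃ - y₃^2 + 4)) by
      rw [sub_div, mul_div_cancel_right₀ (2:ℝ) (by positivity)]; ring]
    apply div_neg_of_neg_of_pos _ (by positivity)
    nlinarith
  refine ⟨hpos, fun m hm => ?_, ?_⟩
  · rw [(hderiv m hm).deriv]; exact hneg m hm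
  · have hconv : Convex ℝ (Set.Ioi (0:ℝ)) := convex_Ioi 0
    apply StrictAntiOn.mono (s := interior (Set.Ioi (0:ℝ)) ∪ Set.Ioi 0) ?_ Set.subset_union_right
    rw [interior_Ioi, Set.union_self]
    apply strictAntiOn_of_deriv_neg hconv
    · apply ContinuousOn.add (by fun_prop)
      exact (Real.continuous_sqrt.comp (by continuity)).continuousOn
    · rw [interior_Ioi]
      intro m hm
      rw [(hderiv m hm).deriv]; exact hneg m hm
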